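/- Let X be a finite set with |X| = n and let s be a subset of X with |s| = k, where k ≥ 1 and n ≥ 2. The number of subsets t of X with |t| = k, t ≠ s, and t ∩ s ≠ ∅ is at most 2 · C(k, ⌊k/2⌋) · n^{k−1}. -/

import Mathlib

lemma aux_card_contain {α : Type*} [DecidableEq α] (X : Finset α) (k : ℕ) (x : α) :
    (X.powerset.filter (fun t => t.card = k ∧ x ∈ t)).card
      ≤ (X.card - 1).choose (k - 1) := by
  by_cases hxX : x ∈ X
  swap
  · have : X.powerset.filter (fun t => t.card = k ∧ x ∈ t) = ∅ := by
      rw [Finset.filter_eq_empty_iff]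
      intro t ht h
      exact hxX (Finset.mem_powerset.1 ht (h.2))
    simp [this]
  have h : (X.powerset.filter (fun t => t.card = k ∧ x ∈ t)).card
      ≤ ((X.erase x).powersetCard (k - 1)).card := by
    apply Finset.card_le_card_of_injOn (fun t => t.erase x)
    · intro t ht
      simp only [Finset.mem_coe, Finset.mem_filter, Finset.mem_powerset] at ht ⊢
      obtain ⟨hsub, hcard, hxt⟩ := ht
      rw [Finset.mem_powersetCard]
      constructor
      · intro y hy
        simp only [Finset.mem_erase] at hy ⊢
        exact ⟨hy.1, hsub hy.2⟩
      · rw [Finset.card_erase_of_mem hxt, hcard]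
    · intro a ha b hb hab
      simp only [Finset.coe_filter, Set.mem_setOf_eq, Finset.mem_powerset] at ha hb
      have : insert x (a.erase x) = insert x (b.erase x) := by simp only at hab; rw [hab]
      rwa [Finset.insert_erase ha.2.2, Finset.insert_erase hb.2.2] at this
  rw [Finset.card_powersetCard, Finset.card_erase_of_mem] at h
  · exact h
  · by_contra hx
    exact hx hxX

/-- The number of `k`-subsets `t` of `X` with `t ≠ s` and `t ∩ s ≠ ∅` is at most
`2 * C(k, ⌊k/2⌋) * n^(k-1)`, where `|X| = n ≥ 2`, `s ⊆ X`, `|s| = k ≥ 1`. -/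
theorem card_ksets_meeting_s_le {α : Type*} [DecidableEq α]
    (X : Finset α) (n k : ℕ) (hX : X.card = n) (hn : 2 ≤ n) (hk : 1 ≤ k)
    (s : Finset α) (hsX : s ⊆ X) (hs : s.card = k) :
    (X.powerset.filter (fun t => t.card = k ∧ t ≠ s ∧ (t ∩ s).Nonempty)).card
      ≤ 2 * k.choose (k / 2) * n ^ (k - 1) := by
  have hsub : X.powerset.filter (fun t => t.card = k ∧ t ≠ s ∧ (t ∩ s).Nonempty)
      ⊆ s.biUnion (fun x => X.powerset.filter (fun t => t.card = k ∧ x ∈ t)) := by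
    intro t ht
    simp only [Finset.mem_filter, Finset.mem_powerset] at ht
    obtain ⟨htX, hcard, _, ⟨x, hx⟩⟩ := ht
    rw [Finset.mem_inter] at hx
    refine Finset.mem_biUnion.2 ⟨x, hx.2, ?_⟩
    simp [Finset.mem_powerset, htX, hcard, hx.1]
  calc (X.powerset.filter (fun t => t.card = k ∧ t ≠ s ∧ (t ∩ s).Nonempty)).card
      ≤ (s.biUnion (fun x => X.powerset.filter (fun t => t.card = k ∧ x ∈ t))).card :=
        Finset.card_le_card hsub
    _ ≤ ∑ x ∈ s, (X.powerset.filter (fun t => t.card = k ∧ x ∈ t)).card :=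
        Finset.card_biUnion_le
    _ ≤ ∑ _x ∈ s, (n - 1).choose (k - 1) := by
        apply Finset.sum_le_sum
        intro x _
        simpa [hX] using aux_card_contain X k x
    _ = k * (n - 1).choose (k - 1) := by rw [Finset.sum_const, hs, smul_eq_mul]
    _ ≤ (2 * k.choose (k / 2)) * n ^ (k - 1) := by
        apply Nat.mul_le_mul
        · calc k = k.choose 1 := (Nat.choose_one_right k).symm
            _ ≤ k.choose (k / 2) := Nat.choose_le_middle 1 k
            _ ≤ 2 * k.choose (k / 2) := Nat.le_mul_of_pos_left _ (by norm_num)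
        · calc (n - 1).choose (k - 1) ≤ (n - 1) ^ (k - 1) := Nat.choose_le_pow _ _
            _ ≤ n ^ (k - 1) := Nat.pow_le_pow_left (Nat.sub_le n 1) _
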